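/- Define L : [0,∞) → [0,∞) by L(0) = 0 and L(t) = min(t/2, max(2, 8π·log t)) for t > 0, and set ℓ_n = (3/2)^n for integers n ≥ 0. For each n ≥ 0 let M_n = Σ_{k=1}^∞ L^k(ℓ_{n+k}), where L^k denotes the k-fold iterate of L. Then there exists a constant C > 2 such that M_n < C·(n+1) for all n ≥ 0 (in particular, each of these series converges). -/

import Mathlib

open Filter Topology Set OnePoint

noncomputable section

/-- The complex number `2πi`. -/
def twoPiI : ℂ := (2 * (Real.pi : ℂ)) * Complex.I

/-- The "hat" of a planar set: its image in the Riemann sphere `ℂ̂ = OnePoint ℂ`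
together with the point `∞`. -/
def hatSet (A : Set ℂ) : Set (OnePoint ℂ) := OnePoint.some '' A ∪ {∞}

/-- `A` is an arc in the topological space `X` with endpoints `x` and `y`
(possibly degenerate, i.e. a single point when `x = y`). -/
structure IsArc {X : Type*} [TopologicalSpace X] (A : Set X) (x y : X) : Prop where
  mem_left : x ∈ A
  mem_right : y ∈ A
  param : (x = y ∧ A = {x}) ∨
    ∃ f : ℝ → X, ContinuousOn f (Set.Icc 0 1) ∧ Set.InjOn f (Set.Icc 0 1) ∧
      f '' Set.Icc 0 1 = A ∧ f 0 = x ∧ f 1 = y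

/-- `C ⊆ ℂ` is an arc connecting a finite endpoint to infinity: `C ∪ {∞}`, viewed in the
Riemann sphere, is an arc one of whose endpoints is `∞` (the other endpoint being finite). -/
def IsArcToInfinity (C : Set ℂ) : Prop :=
  ∃ z ∈ C, IsArc (hatSet C) (OnePoint.some z) ∞

/-- An unbounded Jordan domain: an open, connected, simply connected subset of `ℂ`,
unbounded, whose boundary together with `∞` forms a Jordan curve in the Riemann sphere. -/
def IsUnboundedJordanDomain (V : Set ℂ) : Prop :=
  IsOpen V ∧ IsConnected V ∧ SimplyConnectedSpace ↥V ∧ ¬ Bornology.IsBounded V ∧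
    Nonempty (↥(hatSet (frontier V)) ≃ₜ ↥(Metric.sphere (0 : ℂ) 1))

/-- The tracts (connected components) of a set `T ⊆ ℂ`. -/
def tracts (T : Set ℂ) : Set (Set ℂ) := {C | ∃ z ∈ T, C = connectedComponentIn T z}

/-- The hair of the set `B ⊆ ℂ ≅ ℝ²` at height `y`. -/
def brushHair (B : Set ℂ) (y : ℝ) : Set ℝ := {x : ℝ | (x : ℂ) + (y : ℂ) * Complex.I ∈ B}

/-- A straight brush, viewed as a subset of `ℂ ≅ ℝ²` (first coordinate = real part,
second coordinate = imaginary part). -/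
structure IsStraightBrush (B : Set ℂ) : Prop where
  closed : IsClosed B
  sub : ∀ z ∈ B, 0 ≤ z.re ∧ Irrational z.im
  hair : ∀ z ∈ B, ∃ t : ℝ, 0 ≤ t ∧ brushHair B z.im = Set.Ici t
  dense : ∀ y : ℝ, Irrational y → y ∈ closure {y' : ℝ | (brushHair B y').Nonempty}
  approx : ∀ z ∈ B, ∀ t : ℝ, brushHair B z.im = Set.Ici t →
    ∃ β γ tβ tγ : ℕ → ℝ,
      (∀ n, β n < z.im ∧ z.im < γ n ∧ brushHair B (β n) = Set.Ici (tβ n) ∧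
        brushHair B (γ n) = Set.Ici (tγ n)) ∧
      Filter.Tendsto β Filter.atTop (nhds z.im) ∧
      Filter.Tendsto γ Filter.atTop (nhds z.im) ∧
      Filter.Tendsto tβ Filter.atTop (nhds t) ∧
      Filter.Tendsto tγ Filter.atTop (nhds t)

/-- A Cantor bouquet: a subset of `ℂ ≅ ℝ²` that is ambiently homeomorphic to a
straight brush. -/
def IsCantorBouquet (A : Set ℂ) : Prop := ∃ h : ℂ ≃ₜ ℂ, IsStraightBrush (h '' A)

/-- Convergence of compact sets in the Hausdorff metric, expressed topologically
(Vietoris convergence); in a compact metrizable space this is equivalent to convergence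
in the Hausdorff metric with respect to any compatible metric. -/
def HausdorffTendsto {X : Type*} [TopologicalSpace X] (A : ℕ → Set X) (L : Set X) : Prop :=
  (∀ U : Set X, IsOpen U → L ⊆ U → ∀ᶠ n in Filter.atTop, A n ⊆ U) ∧
  (∀ U : Set X, IsOpen U → (L ∩ U).Nonempty → ∀ᶠ n in Filter.atTop, (A n ∩ U).Nonempty)

/-- A dendroid: a nonempty compact connected (metrizable) space that is arcwise connected
and hereditarily unicoherent, here as a subset of an ambient topological space. -/
structure IsDendroid {X : Type*} [TopologicalSpace X] (S : Set X) : Prop where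
  nonempty : S.Nonempty
  compact : IsCompact S
  connected : IsConnected S
  arcwise : ∀ x ∈ S, ∀ y ∈ S, ∃ A : Set X, A ⊆ S ∧ IsArc A x y
  hered_unicoherent : ∀ A B : Set X, A ⊆ S → B ⊆ S →
    A.Nonempty → IsCompact A → IsPreconnected A →
    B.Nonempty → IsCompact B → IsPreconnected B → IsPreconnected (A ∩ B)

/-- A dendroid `S` that is smooth at the point `x₀`: whenever `yₙ → y` in `S`, the arcs
`[x₀, yₙ]` converge to `[x₀, y]` in the Hausdorff metric. -/
def IsSmoothDendroidAt {X : Type*} [TopologicalSpace X] (S : Set X) (x₀ : X) : Prop :=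
  IsDendroid S ∧ x₀ ∈ S ∧
    ∀ (y : X) (yn : ℕ → X), y ∈ S → (∀ n, yn n ∈ S) →
      Filter.Tendsto yn Filter.atTop (nhds y) →
      ∀ (An : ℕ → Set X) (A : Set X),
        (∀ n, An n ⊆ S ∧ IsArc (An n) x₀ (yn n)) →
        (A ⊆ S ∧ IsArc A x₀ y) → HausdorffTendsto An A

/-- `x` is accessible from `ℂ ∖ A`. -/
def AccessibleFrom (A : Set ℂ) (x : ℂ) : Prop :=
  ∃ γ : ℝ → ℂ, ContinuousOn γ (Set.Icc 0 1) ∧ (∀ t ∈ Set.Ico (0 : ℝ) 1, γ t ∉ A) ∧ γ 1 = x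

/-- The function `L(t) = min(t/2, max(2, 8π log t))` for `t > 0`, with `L(0) = 0`
(and junk value `0` for negative arguments). -/
def Lfun : ℝ → ℝ := fun t =>
  if t ≤ 0 then 0 else min (t / 2) (max 2 (8 * Real.pi * Real.log t))

/-- A function of the class `B_log`: a holomorphic map `F : 𝒯 → H` satisfying the
conditions (a)–(d) of Definition 2.1 (Rottenfußer–Rückert–Rempe–Schleicher /
Rempe). `F` is modelled as a total function `ℂ → ℂ` whose behaviour is constrained
on `Tr = 𝒯`. -/
structure BlogMap where
  /-- the map -/
  F : ℂ → ℂ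
  /-- the domain `𝒯` -/
  Tr : Set ℂ
  /-- the range `H` -/
  H : Set ℂ
  holo : DifferentiableOn ℂ F Tr
  maps_to : Set.MapsTo F Tr H
  H_jordan : IsUnboundedJordanDomain H
  H_periodic : ∀ z : ℂ, z ∈ H ↔ z + twoPiI ∈ H
  H_halfplane : ∃ R : ℝ, {z : ℂ | R < z.re} ⊆ H
  Tr_nonempty : Tr.Nonempty
  Tr_periodic : ∀ z : ℂ, z ∈ Tr ↔ z + twoPiI ∈ Tr
  Tr_re_bddBelow : ∃ m : ℝ, ∀ z ∈ Tr, m ≤ z.re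
  Tr_re_unbddAbove : ∀ M : ℝ, ∃ z ∈ Tr, M < z.re
  tract_jordan : ∀ C ∈ tracts Tr, IsUnboundedJordanDomain C
  tract_translates : ∀ C ∈ tracts Tr, ∀ k : ℤ, k ≠ 0 →
    Disjoint C ((fun z => z + (k : ℂ) * twoPiI) '' C)
  tract_bij : ∀ C ∈ tracts Tr, Set.BijOn F C H
  tract_ext : ∀ C ∈ tracts Tr, ∃ G : OnePoint ℂ → OnePoint ℂ,
    ContinuousOn G (closure (OnePoint.some '' C)) ∧
    (∀ z ∈ C, G (OnePoint.some z) = OnePoint.some (F z)) ∧ G ∞ = ∞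
  closures_disjoint : ∀ C ∈ tracts Tr, ∀ C' ∈ tracts Tr, C ≠ C' →
    Disjoint (closure C) (closure C')
  tracts_accumulate : ∀ z : ℕ → ℂ, (∀ n, z n ∈ Tr) →
    (Function.Injective fun n => connectedComponentIn Tr (z n)) →
    Filter.Tendsto (fun n => ‖z n‖) Filter.atTop Filter.atTop

namespace BlogMap

/-- `F ∈ B^p_log`: `F` is `2πi`-periodic. -/
def Periodic (Φ : BlogMap) : Prop := ∀ z ∈ Φ.Tr, Φ.F (z + twoPiI) = Φ.F z

/-- `F` is of disjoint type: the closure of `𝒯` is contained in `H`. -/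
def DisjointType (Φ : BlogMap) : Prop := closure Φ.Tr ⊆ Φ.H

/-- The Julia set `J(F) = {z ∈ H : the orbit of z stays in 𝒯}`. -/
def julia (Φ : BlogMap) : Set ℂ := {z | z ∈ Φ.H ∧ ∀ n : ℕ, Φ.F^[n] z ∈ Φ.Tr}

/-- `Ĵ(F) = J(F) ∪ {∞} ⊆ ℂ̂`. -/
def juliaHat (Φ : BlogMap) : Set (OnePoint ℂ) := hatSet Φ.julia

/-- The escaping set `I(F)`. -/
def escaping (Φ : BlogMap) : Set ℂ :=
  {z | z ∈ Φ.julia ∧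
    Filter.Tendsto (fun n => (Φ.F^[n] z).re) Filter.atTop Filter.atTop}

/-- A ray tail of `F`: an injective curve `γ : [t₀, ∞) → I(F)` such that for each `n ≥ 1`
the map `t ↦ Fⁿ(γ(t))` is injective with real parts tending to `+∞`, and such that
`Fⁿ(γ(t)) → ∞` uniformly in `t` as `n → ∞`. -/
structure IsRayTail (Φ : BlogMap) (γ : ℝ → ℂ) (t₀ : ℝ) : Prop where
  cont : ContinuousOn γ (Set.Ici t₀)
  inj : Set.InjOn γ (Set.Ici t₀)
  maps : Set.MapsTo γ (Set.Ici t₀) Φ.escaping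
  iter_inj : ∀ n : ℕ, 1 ≤ n → Set.InjOn (fun t => Φ.F^[n] (γ t)) (Set.Ici t₀)
  iter_tendsto : ∀ n : ℕ, 1 ≤ n →
    Filter.Tendsto (fun t => (Φ.F^[n] (γ t)).re) Filter.atTop Filter.atTop
  unif : ∀ R : ℝ, ∃ N : ℕ, ∀ n : ℕ, N ≤ n → ∀ t : ℝ, t₀ ≤ t →
    R < ‖Φ.F^[n] (γ t)‖

/-- `F` is criniferous: every escaping point is eventually mapped onto a ray tail. -/
def Criniferous (Φ : BlogMap) : Prop :=
  ∀ z ∈ Φ.escaping, ∃ N : ℕ, ∀ n : ℕ, N ≤ n →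
    ∃ (γ : ℝ → ℂ) (t₀ : ℝ), Φ.IsRayTail γ t₀ ∧ ∃ t : ℝ, t₀ ≤ t ∧ γ t = Φ.F^[n] z

/-- An injective curve `γ : (0, ∞) → I(F)` whose restriction to every `[t, ∞)`, `t > 0`,
is a ray tail. -/
def IsRayCurve (Φ : BlogMap) (γ : ℝ → ℂ) : Prop :=
  ContinuousOn γ (Set.Ioi 0) ∧ Set.InjOn γ (Set.Ioi 0) ∧
    Set.MapsTo γ (Set.Ioi 0) Φ.escaping ∧ ∀ t : ℝ, 0 < t → Φ.IsRayTail γ t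

/-- A dynamic ray: a maximal such curve (maximal with respect to inclusion of images). -/
def IsDynamicRay (Φ : BlogMap) (γ : ℝ → ℂ) : Prop :=
  Φ.IsRayCurve γ ∧ ∀ γ' : ℝ → ℂ, Φ.IsRayCurve γ' →
    γ '' Set.Ioi 0 ⊆ γ' '' Set.Ioi 0 → γ '' Set.Ioi 0 = γ' '' Set.Ioi 0

/-- The curve `γ : (0,∞) → ℂ` lands at the point `z`. -/
def LandsAt (γ : ℝ → ℂ) (z : ℂ) : Prop :=
  Filter.Tendsto γ (nhdsWithin 0 (Set.Ioi 0)) (nhds z)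

/-- `z ⪯ w` on `Ĵ(F)`: `w` lies on the arc `[z, ∞]` joining `z` to `∞` in `Ĵ(F)`. -/
def juliaLE (Φ : BlogMap) (z w : ℂ) : Prop :=
  ∃ A : Set (OnePoint ℂ), A ⊆ Φ.juliaHat ∧
    IsArc A (OnePoint.some z) ∞ ∧ OnePoint.some w ∈ A

/-- `z ≺ w` on `Ĵ(F)`. -/
def juliaLT (Φ : BlogMap) (z w : ℂ) : Prop := Φ.juliaLE z w ∧ z ≠ w

/-- `(z, w)` is a bad pair: `z ≺ w`, but there are sequences `zₙ → z`, `wₙ → w` with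
`wₙ ≺ zₙ` for all `n`. -/
def IsBadPair (Φ : BlogMap) (z w : ℂ) : Prop :=
  Φ.juliaLT z w ∧ ∃ zs ws : ℕ → ℂ,
    Filter.Tendsto zs Filter.atTop (nhds z) ∧
    Filter.Tendsto ws Filter.atTop (nhds w) ∧
    ∀ n : ℕ, Φ.juliaLT (ws n) (zs n)

/-- `X` is a bad set: the union of a bad pair with corresponding approximating
sequences. -/
def IsBadSet (Φ : BlogMap) (X : Set ℂ) : Prop :=
  ∃ (z w : ℂ) (zs ws : ℕ → ℂ),
    Φ.juliaLT z w ∧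
    Filter.Tendsto zs Filter.atTop (nhds z) ∧
    Filter.Tendsto ws Filter.atTop (nhds w) ∧
    (∀ n : ℕ, Φ.juliaLT (ws n) (zs n)) ∧
    X = {z, w} ∪ Set.range zs ∪ Set.range ws

/-- `X ⊆ J(F)` is absorbing: forward invariant, every escaping point is eventually
mapped into `X`, and the image of every arc to infinity contained in `X` is again an
arc to infinity. -/
def Absorbing (Φ : BlogMap) (X : Set ℂ) : Prop :=
  Φ.F '' X ⊆ X ∧ (∀ z ∈ Φ.escaping, ∃ n : ℕ, Φ.F^[n] z ∈ X) ∧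
    ∀ A : Set ℂ, A ⊆ X → IsArcToInfinity A → IsArcToInfinity (Φ.F '' A)

/-- `F` satisfies a uniform head-start condition on `J(F)` with respect to `ρ`. -/
def UniformHeadStartOn (Φ : BlogMap) (ρ : ℂ → ℝ) : Prop :=
  ∃ φ : ℝ → ℝ,
    MonotoneOn φ (Set.Ici 0) ∧ UpperSemicontinuousOn φ (Set.Ici 0) ∧
    (∀ t : ℝ, 0 ≤ t → t ≤ φ t ∧ 0 ≤ φ t) ∧
    ∀ z w : ℂ, z ∈ Φ.julia → w ∈ Φ.julia →
      connectedComponentIn Φ.julia z = connectedComponentIn Φ.julia w →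
      ((φ (ρ z) < ρ w → φ (ρ (Φ.F z)) < ρ (Φ.F w)) ∧
        (z ≠ w → ∃ n : ℕ,
          φ (ρ (Φ.F^[n] z)) < ρ (Φ.F^[n] w) ∨ φ (ρ (Φ.F^[n] w)) < ρ (Φ.F^[n] z)))

end BlogMap


lemma Lfun_nonneg (t : ℝ) : 0 ≤ Lfun t := by
  unfold Lfun
  split
  · exact le_refl 0
  · rename_i h
    push_neg at h
    exact le_min (by linarith) (le_max_of_le_left (by norm_num))

lemma Lfun_le_half {t : ℝ} (ht : 0 ≤ t) : Lfun t ≤ t / 2 := by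
  unfold Lfun; split
  · linarith
  · exact min_le_left _ _

lemma Lfun_iter_le (m : ℕ) {x : ℝ} (hx : 0 ≤ x) : Lfun^[m] x ≤ x / 2 ^ m := by
  induction m generalizing x with
  | zero => simp
  | succ m ih =>
    rw [Function.iterate_succ_apply]
    calc Lfun^[m] (Lfun x) ≤ Lfun x / 2 ^ m := ih (Lfun_nonneg x)
      _ ≤ (x / 2) / 2 ^ m := by gcongr; exacts [Lfun_le_half hx]
      _ = x / 2 ^ (m + 1) := by ring

lemma Lfun_le_max {t : ℝ} (ht : 0 < t) : Lfun t ≤ max 2 (8 * Real.pi * Real.log t) := by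
  unfold Lfun
  rw [if_neg (not_le.mpr ht)]
  exact min_le_right _ _


theorem stmt0 :
    ∃ C : ℝ, 2 < C ∧ ∀ n : ℕ,
      (Summable fun k : ℕ => Lfun^[k + 1] ((3 / 2 : ℝ) ^ (n + (k + 1)))) ∧
      (∑' k : ℕ, Lfun^[k + 1] ((3 / 2 : ℝ) ^ (n + (k + 1)))) < C * (n + 1) := by
  set c : ℝ := 8 * Real.pi * Real.log (3 / 2) with hc_def
  have hc : 0 < c := by
    have := Real.log_pos (by norm_num : (1:ℝ) < 3 / 2)
    positivity
  refine ⟨5 + 5 * c, by linarith, fun n => ?_⟩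
  set f : ℕ → ℝ := fun k => Lfun^[k + 1] ((3 / 2 : ℝ) ^ (n + (k + 1))) with hf_def
  set g : ℕ → ℝ := fun k => (2 + c * (n + 1) + c * k) * (1 / 2 : ℝ) ^ k with hg_def
  have hr : ‖(1 / 2 : ℝ)‖ < 1 := by rw [Real.norm_eq_abs, abs_of_pos] <;> norm_num
  have hg1 : Summable fun k : ℕ => (2 + c * (n + 1)) * (1 / 2 : ℝ) ^ k :=
    (summable_geometric_of_lt_one (by norm_num) (by norm_num)).mul_left _
  have hg2 : Summable fun k : ℕ => (k : ℝ) * (1 / 2 : ℝ) ^ k := by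
    simpa using summable_pow_mul_geometric_of_norm_lt_one 1 hr
  have hg : Summable g := by
    have := hg1.add (hg2.mul_left c)
    refine this.congr fun k => ?_
    simp only [hg_def]; ring
  have hf_nonneg : ∀ k, 0 ≤ f k := by
    intro k
    simp only [hf_def, Function.iterate_succ_apply']
    exact Lfun_nonneg _
  have hfg : ∀ k, f k ≤ g k := by
    intro k
    have hx : (0:ℝ) < (3 / 2 : ℝ) ^ (n + (k + 1)) := by positivity
    have hlog : 8 * Real.pi * Real.log ((3 / 2 : ℝ) ^ (n + (k + 1))) = c * (n + (k + 1)) := by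
      rw [Real.log_pow, hc_def]; push_cast; ring
    have step1 : f k ≤ Lfun ((3 / 2 : ℝ) ^ (n + (k + 1))) / 2 ^ k := by
      simp only [hf_def, Function.iterate_succ_apply]
      exact Lfun_iter_le k (Lfun_nonneg _)
    have step2 : Lfun ((3 / 2 : ℝ) ^ (n + (k + 1))) ≤ 2 + c * (n + 1) + c * k := by
      refine (Lfun_le_max hx).trans ?_
      rw [hlog]
      have h1 : 0 ≤ c * ((n:ℝ) + 1) := by positivity
      have h2 : 0 ≤ c * (k:ℝ) := by positivity
      refine max_le (by linarith) ?_
      nlinarith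
    calc f k ≤ Lfun ((3 / 2 : ℝ) ^ (n + (k + 1))) / 2 ^ k := step1
      _ ≤ (2 + c * (n + 1) + c * k) / 2 ^ k := by gcongr
      _ = g k := by
        simp only [hg_def]
        rw [div_eq_mul_inv, one_div, inv_pow]
  have hf : Summable f := Summable.of_nonneg_of_le hf_nonneg hfg hg
  refine ⟨hf, ?_⟩
  have htsum_g : ∑' k, g k = (2 + c * (n + 1)) * 2 + c * 2 := by
    have e : ∀ k : ℕ, g k = (2 + c * (n + 1)) * (1 / 2 : ℝ) ^ k
        + c * ((k : ℝ) * (1 / 2 : ℝ) ^ k) := by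
      intro k; simp only [hg_def]; ring
    rw [tsum_congr e, Summable.tsum_add hg1 (hg2.mul_left c), tsum_mul_left, tsum_mul_left,
      tsum_geometric_of_lt_one (by norm_num) (by norm_num),
      tsum_coe_mul_geometric_of_norm_lt_one hr]
    norm_num
  have h1 : ∑' k, f k ≤ ∑' k, g k := Summable.tsum_le_tsum hfg hf hg
  rw [htsum_g] at h1
  have hn : (0:ℝ) ≤ (n : ℝ) := Nat.cast_nonneg n
  nlinarith [hc, hn]
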